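/- For every integer k ≥ 1 and every real t, the k-th derivative of the Mills ratio satisfies R^{(k)}(t) = P_k(t)·R(t) − Q_{k−1}(t), where P_k and Q_{k−1} are the Laplace polynomials. -/

import Mathlib

open MeasureTheory Polynomial

/-- The standard normal density. -/
noncomputable def gaussPdf (t : ℝ) : ℝ := Real.exp (-t ^ 2 / 2) / Real.sqrt (2 * Real.pi)

/-- The tail of the standard normal distribution. -/
noncomputable def gaussTail (t : ℝ) : ℝ := ∫ s in Set.Ioi t, gaussPdf s

/-- The Mills ratio. -/
noncomputable def mills (t : ℝ) : ℝ := gaussTail t / gaussPdf t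

/-- The Laplace polynomials `P_k`. -/
noncomputable def laplaceP : ℕ → Polynomial ℝ
  | 0 => 1
  | k + 1 => X * laplaceP k + derivative (laplaceP k)

/-- The Laplace polynomials `Q_k`. -/
noncomputable def laplaceQ : ℕ → Polynomial ℝ
  | 0 => 1
  | k + 1 => laplaceP (k + 1) + derivative (laplaceQ k)

lemma gaussPdf_pos (t : ℝ) : 0 < gaussPdf t := by
  apply div_pos (Real.exp_pos _)
  exact Real.sqrt_pos.2 (by positivity)

lemma continuous_gaussPdf : Continuous gaussPdf := by
  apply Continuous.div_const
  exact (Real.continuous_exp.comp (by continuity))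

lemma integrable_gaussPdf : Integrable gaussPdf := by
  have h := integrable_exp_neg_mul_sq (b := (1:ℝ)/2) (by norm_num)
  have : gaussPdf = fun t => Real.exp (-(1/2) * t ^ 2) * (Real.sqrt (2 * Real.pi))⁻¹ := by
    funext t
    rw [gaussPdf, show -t ^ 2 / 2 = -(1/2) * t ^ 2 by ring, div_eq_mul_inv]
  rw [this]
  exact h.mul_const _

lemma gaussTail_split {a b : ℝ} (hab : a ≤ b) :
    gaussTail a = (∫ x in Set.Ioc a b, gaussPdf x) + gaussTail b := by
  rw [gaussTail, gaussTail,
    ← setIntegral_union (Set.Ioc_disjoint_Ioi le_rfl) measurableSet_Ioi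
      integrable_gaussPdf.integrableOn integrable_gaussPdf.integrableOn,
    Set.Ioc_union_Ioi_eq_Ioi hab]

lemma gaussTail_eq (t : ℝ) : gaussTail t = gaussTail 0 - ∫ s in (0:ℝ)..t, gaussPdf s := by
  rcases le_total t 0 with h | h
  · rw [intervalIntegral.integral_symm, intervalIntegral.integral_of_le h]
    have := gaussTail_split h
    linarith
  · rw [intervalIntegral.integral_of_le h]
    have := gaussTail_split h
    linarith

lemma hasDerivAt_gaussTail (t : ℝ) : HasDerivAt gaussTail (-gaussPdf t) t := by
  have h : HasDerivAt (fun u => ∫ s in (0:ℝ)..u, gaussPdf s) (gaussPdf t) t :=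
    intervalIntegral.integral_hasDerivAt_right integrable_gaussPdf.intervalIntegrable
      continuous_gaussPdf.aestronglyMeasurable.stronglyMeasurableAtFilter
      continuous_gaussPdf.continuousAt
  have := (hasDerivAt_const t (gaussTail 0)).sub h
  simp only [zero_sub] at this
  exact this.congr_of_eventuallyEq (Filter.Eventually.of_forall fun u => gaussTail_eq u)

lemma hasDerivAt_gaussPdf (t : ℝ) : HasDerivAt gaussPdf (-t * gaussPdf t) t := by
  have h1 : HasDerivAt (fun t : ℝ => -t ^ 2 / 2) (-t) t := by
    have := ((hasDerivAt_pow 2 t).neg).div_const 2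
    simpa using this.congr_deriv (by ring)
  have := (h1.exp).div_const (Real.sqrt (2 * Real.pi))
  exact this.congr_deriv (by rw [gaussPdf]; ring)

lemma hasDerivAt_mills (t : ℝ) : HasDerivAt mills (t * mills t - 1) t := by
  have h := (hasDerivAt_gaussTail t).div (hasDerivAt_gaussPdf t) (gaussPdf_pos t).ne'
  apply h.congr_deriv
  field_simp [mills, (gaussPdf_pos t).ne']
  have e : gaussPdf t * t * (gaussTail t / gaussPdf t) = gaussTail t * t := by
    field_simp [(gaussPdf_pos t).ne']
  rw [mills, mul_sub, ← mul_assoc, e]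
  ring

/-- For every `k ≥ 1` and every real `t`, the `k`-th derivative of the Mills ratio
satisfies `R^{(k)}(t) = P_k(t)·R(t) − Q_{k−1}(t)`. -/
theorem iteratedDeriv_mills (k : ℕ) (hk : 1 ≤ k) (t : ℝ) :
    iteratedDeriv k mills t = (laplaceP k).eval t * mills t - (laplaceQ (k - 1)).eval t := by
  obtain ⟨n, rfl⟩ := Nat.exists_eq_add_of_le hk
  simp only [Nat.add_sub_cancel_left]
  clear hk
  induction n generalizing t with
  | zero =>
      rw [show (1 + 0) = 1 from rfl, iteratedDeriv_one, (hasDerivAt_mills t).deriv]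
      simp [laplaceP, laplaceQ]
  | succ n ih =>
      have hstep : ∀ s : ℝ, HasDerivAt (fun u => (laplaceP (1 + n)).eval u * mills u -
          (laplaceQ n).eval u)
          ((laplaceP (1 + n + 1)).eval s * mills s - (laplaceQ (n + 1)).eval s) s := by
        intro s
        have h := (((laplaceP (1 + n)).hasDerivAt s).mul (hasDerivAt_mills s)).sub
          ((laplaceQ n).hasDerivAt s)
        apply h.congr_deriv
        have hP : laplaceP (1 + n + 1) = X * laplaceP (1 + n) + derivative (laplaceP (1 + n)) :=
          rfl
        have hQ : laplaceQ (n + 1) = laplaceP (n + 1) + derivative (laplaceQ n) := rfl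
        rw [hP, hQ, show n + 1 = 1 + n from Nat.add_comm n 1]
        simp only [eval_add, eval_mul, eval_X]
        ring
      have h2 : iteratedDeriv (1 + (n + 1)) mills = deriv (iteratedDeriv (1 + n) mills) := by
        rw [show 1 + (n + 1) = (1 + n) + 1 by ring, iteratedDeriv_succ]
      rw [h2]
      have hfun : iteratedDeriv (1 + n) mills = fun u => (laplaceP (1 + n)).eval u * mills u -
          (laplaceQ n).eval u := funext ih
      rw [hfun]
      exact (hstep t).deriv
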